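/- If Λ ⊂ ℝ^d is a set such that the exponentials {e^{2πi⟨λ,x⟩} : λ ∈ Λ} are pairwise orthogonal in L²([−1/2,1/2]^d), then the translates {Q + λ : λ ∈ Λ} of the unit cube Q form a packing, i.e., distinct translates intersect in a set of measure zero. -/

import Mathlib

open MeasureTheory Real

lemma oneDim_aux (a : ℝ) (ha : a ≠ 0)
    (h : (∫ t in Set.Icc (-(1:ℝ)/2) (1/2), Complex.exp (2*π*Complex.I*(a*t))) = 0) :
    ∃ n : ℤ, (a:ℝ) = n := by
  set c : ℂ := 2*π*Complex.I*a with hcdef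
  have hc : c ≠ 0 := by
    rw [hcdef]
    exact mul_ne_zero (mul_ne_zero (mul_ne_zero two_ne_zero
      (Complex.ofReal_ne_zero.mpr Real.pi_ne_zero)) Complex.I_ne_zero)
      (Complex.ofReal_ne_zero.mpr ha)
  rw [MeasureTheory.integral_Icc_eq_integral_Ioc,
    ← intervalIntegral.integral_of_le (by norm_num : (-(1:ℝ)/2) ≤ 1/2)] at h
  have hrw : ∀ t : ℝ, 2*(π:ℂ)*Complex.I*((a:ℂ)*(t:ℂ)) = c * t := by
    intro t; rw [hcdef]; push_cast; ring
  simp_rw [hrw] at h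
  rw [integral_exp_mul_complex hc, div_eq_zero_iff] at h
  rcases h with h | h
  · have heq : Complex.exp (c * ((1:ℝ)/2)) = Complex.exp (c * ((-(1:ℝ)/2))) := by
      have h' := sub_eq_zero.mp h
      convert h' using 3 <;> push_cast <;> ring
    have h1 : Complex.exp c = 1 := by
      rw [show c = c * ((1:ℝ)/2) - c * ((-(1:ℝ)/2)) by push_cast; ring, Complex.exp_sub,
        heq, div_self (Complex.exp_ne_zero _)]
    rcases Complex.exp_eq_one_iff.mp h1 with ⟨n, hn⟩
    refine ⟨n, ?_⟩
    have h3 : (a : ℂ) = (n : ℂ) := by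
      have h2 : (2*(π:ℂ)*Complex.I) * a = (2*(π:ℂ)*Complex.I) * n := by
        rw [← hcdef, hn]; push_cast; ring
      exact mul_left_cancel₀ (mul_ne_zero (mul_ne_zero two_ne_zero
        (Complex.ofReal_ne_zero.mpr Real.pi_ne_zero)) Complex.I_ne_zero) h2
    exact_mod_cast h3
  · exact absurd h hc

lemma cube_integral_prod (d : ℕ) (a : Fin d → ℝ) :
    (∫ x in Set.univ.pi fun _ : Fin d => Set.Icc (-(1:ℝ)/2) (1/2),
       ∏ i, Complex.exp (2*π*Complex.I*(a i * x i)))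
      = ∏ i, ∫ t in Set.Icc (-(1:ℝ)/2) (1/2), Complex.exp (2*π*Complex.I*(a i * t)) := by
  have hms : MeasurableSet (Set.univ.pi fun _ : Fin d => Set.Icc (-(1:ℝ)/2) (1/2)) :=
    MeasurableSet.univ_pi fun _ => measurableSet_Icc
  rw [← integral_indicator hms]
  have hind : (Set.univ.pi fun _ : Fin d => Set.Icc (-(1:ℝ)/2) (1/2)).indicator
      (fun x => ∏ i, Complex.exp (2*π*Complex.I*(a i * x i)))
      = fun x => ∏ i, (Set.Icc (-(1:ℝ)/2) (1/2)).indicator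
          (fun t => Complex.exp (2*π*Complex.I*(a i * t))) (x i) := by
    funext x
    by_cases hx : x ∈ Set.univ.pi fun _ : Fin d => Set.Icc (-(1:ℝ)/2) (1/2)
    · rw [Set.indicator_of_mem hx]
      exact (Finset.prod_congr rfl fun i _ =>
        (Set.indicator_of_mem (hx i (Set.mem_univ i))
          (fun t => Complex.exp (2*π*Complex.I*(a i * t)))).symm)
    · rw [Set.indicator_of_notMem hx]
      rw [Set.mem_univ_pi] at hx
      push_neg at hx
      rcases hx with ⟨i, hi⟩
      exact (Finset.prod_eq_zero (Finset.mem_univ i) (Set.indicator_of_notMem hi _)).symm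
  rw [hind, MeasureTheory.volume_pi, MeasureTheory.integral_fintype_prod_eq_prod
    (fun i t => (Set.Icc (-(1:ℝ)/2) (1/2)).indicator
      (fun s => Complex.exp (2*π*Complex.I*(a i * s))) t)]
  exact Finset.prod_congr rfl fun i _ => integral_indicator measurableSet_Icc

/-- If the exponentials with frequencies in `Λ` are pairwise orthogonal in
`L²([-1/2,1/2]^d)`, then the translates of the unit cube by `Λ` form a packing. -/
theorem stmt_3 {d : ℕ} (Λ : Set (Fin d → ℝ))
    (horth : ∀ l ∈ Λ, ∀ m ∈ Λ, l ≠ m →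
      (∫ x in Set.univ.pi fun _ : Fin d => Set.Icc (-(1:ℝ)/2) (1/2),
        Complex.exp (2 * π * Complex.I * (∑ i, l i * x i)) *
          (starRingEnd ℂ) (Complex.exp (2 * π * Complex.I * (∑ i, m i * x i)))) = 0) :
    ∀ l ∈ Λ, ∀ m ∈ Λ, l ≠ m →
      volume (((fun x => x + l) '' (Set.univ.pi fun _ : Fin d => Set.Icc (-(1:ℝ)/2) (1/2))) ∩
        ((fun x => x + m) '' (Set.univ.pi fun _ : Fin d => Set.Icc (-(1:ℝ)/2) (1/2)))) = 0 := by
  intro l hl m hm hlm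
  have h0 := horth l hl m hm hlm
  -- rewrite integrand as a product
  have hpt : ∀ x : Fin d → ℝ,
      Complex.exp (2 * π * Complex.I * (∑ i, l i * x i)) *
        (starRingEnd ℂ) (Complex.exp (2 * π * Complex.I * (∑ i, m i * x i)))
      = ∏ i, Complex.exp (2*π*Complex.I*(((l i - m i : ℝ) : ℂ) * ((x i : ℝ) : ℂ))) := by
    intro x
    rw [← Complex.exp_conj]
    have h1 : 2 * (π:ℂ) * Complex.I * ((∑ i, m i * x i : ℝ) : ℂ)
        = ((2 * π * ∑ i, m i * x i : ℝ) : ℂ) * Complex.I := by push_cast; ring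
    have hconj : (starRingEnd ℂ) (2 * (π:ℂ) * Complex.I * ((∑ i, m i * x i : ℝ) : ℂ))
        = -(2 * (π:ℂ) * Complex.I * ((∑ i, m i * x i : ℝ) : ℂ)) := by
      rw [h1, map_mul, Complex.conj_ofReal, Complex.conj_I]; ring
    rw [hconj, ← Complex.exp_add, ← Complex.exp_sum]
    congr 1
    push_cast
    rw [Finset.mul_sum, Finset.mul_sum, ← sub_eq_add_neg, ← Finset.sum_sub_distrib]
    exact Finset.sum_congr rfl fun i _ => by ring
  simp_rw [hpt] at h0
  rw [cube_integral_prod d (fun i => l i - m i)] at h0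
  rcases Finset.prod_eq_zero_iff.mp h0 with ⟨i, -, hzero⟩
  have hai : l i - m i ≠ 0 := by
    intro h'
    rw [h'] at hzero
    simp [Real.volume_Icc] at hzero
    norm_num at hzero
  obtain ⟨n, hn⟩ := oneDim_aux _ hai hzero
  have hn0 : n ≠ 0 := by
    intro h'
    rw [h'] at hn
    exact hai (by exact_mod_cast hn)
  have habs : (1:ℝ) ≤ |l i - m i| := by
    rw [hn, ← Int.cast_abs]
    exact_mod_cast Int.one_le_abs hn0
  -- measure part
  set C : Fin d → Set ℝ := fun j =>
    Set.Icc (-(1:ℝ)/2 + l j) (1/2 + l j) ∩ Set.Icc (-(1:ℝ)/2 + m j) (1/2 + m j) with hC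
  have hsub : ((fun x => x + l) '' (Set.univ.pi fun _ : Fin d => Set.Icc (-(1:ℝ)/2) (1/2))) ∩
      ((fun x => x + m) '' (Set.univ.pi fun _ : Fin d => Set.Icc (-(1:ℝ)/2) (1/2)))
      ⊆ Set.univ.pi C := by
    rintro x ⟨⟨y, hy, rfl⟩, ⟨z, hz, hzx⟩⟩
    intro j _
    have hyj := hy j (Set.mem_univ j)
    have hzj := hz j (Set.mem_univ j)
    have hxj : z j + m j = y j + l j := by simpa using congrFun hzx j
    simp only [Pi.add_apply]
    simp only [Set.mem_Icc] at hyj hzj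
    constructor
    · exact ⟨by linarith [hyj.1], by linarith [hyj.2]⟩
    · rw [← hxj]
      exact ⟨by linarith [hzj.1], by linarith [hzj.2]⟩
  refine le_antisymm ?_ zero_le
  calc volume (((fun x => x + l) '' (Set.univ.pi fun _ : Fin d => Set.Icc (-(1:ℝ)/2) (1/2))) ∩
        ((fun x => x + m) '' (Set.univ.pi fun _ : Fin d => Set.Icc (-(1:ℝ)/2) (1/2))))
      ≤ volume (Set.univ.pi C) := measure_mono hsub
    _ = ∏ j, volume (C j) := volume_pi_pi C
    _ = 0 := by
        refine Finset.prod_eq_zero (Finset.mem_univ i) ?_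
        show volume (Set.Icc (-(1:ℝ)/2 + l i) (1/2 + l i) ∩
          Set.Icc (-(1:ℝ)/2 + m i) (1/2 + m i)) = 0
        rw [Set.Icc_inter_Icc, Real.volume_Icc]
        apply ENNReal.ofReal_eq_zero.mpr
        rcases le_total (l i) (m i) with hle | hle
        · rw [min_eq_left (by linarith), max_eq_right (by linarith)]
          have h1 : 1 ≤ m i - l i := by
            rcases abs_cases (l i - m i) with ⟨h1, _⟩ | ⟨h1, _⟩ <;> linarith
          linarith
        · rw [min_eq_right (by linarith), max_eq_left (by linarith)]
          have h1 : 1 ≤ l i - m i := by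
            rcases abs_cases (l i - m i) with ⟨h1, _⟩ | ⟨h1, _⟩ <;> linarith
          linarith
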